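/- (Local truncation error of the filtered two-step variational integrator, ε = 1.) Let ε = 1, let A ∈ C⁴(ℝ³, ℝ³), F ∈ C³(ℝ³, ℝ³), and let x: [0,T] → ℝ³ be a five times continuously differentiable solution of ẍ(t) = ẋ(t) × B(x(t)) + F(x(t)) with B = ∇×A. For step size h > 0 and t_n = nh with t_{n−1}, t_{n+1} ∈ [0,T], define the defect Δ_n := x(t_{n+1}) − 2x(t_n) + x(t_{n−1}) − Ψ( (h/2)A'(X₊)ᵀ(x(t_{n+1}) − x(t_n)) + (h/2)A'(X₋)ᵀ(x(t_n) − x(t_{n−1})) − h(A(X₊) − A(X₋)) + (h²/2)(F(X₊) + F(X₋)) ), where X_± := (x(t_n) + x(t_{n±1}))/2 and Ψ = I + (1 − tanc(h/2))B̃₀². Then there exist constants C > 0 and h₀ > 0 such that |Δ_n| ≤ C h⁴ for all 0 < h ≤ h₀ and all admissible n. -/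

import Mathlib

noncomputable section

open Real
open scoped RealInnerProductSpace

/-- ℝ³ as a Euclidean space. -/
abbrev E3 : Type := EuclideanSpace ℝ (Fin 3)

/-- Cross product on ℝ³. -/
def cross3 (a b : E3) : E3 :=
  (EuclideanSpace.equiv (Fin 3) ℝ).symm
    ![a 1 * b 2 - a 2 * b 1, a 2 * b 0 - a 0 * b 2, a 0 * b 1 - a 1 * b 0]

/-- `tanc ζ = tan ζ / ζ`, with value 1 at ζ = 0. -/
def tanc (z : ℝ) : ℝ := if z = 0 then 1 else Real.tan z / z

/-- `sinc ζ = sin ζ / ζ`, with value 1 at ζ = 0. -/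
def sinc3 (z : ℝ) : ℝ := if z = 0 then 1 else Real.sin z / z

/-- The filter matrix `Ψ = I + (1 − tanc θ) B̃₀²`, applied to a vector `v`
(here `B̃₀ w = B₀ × w`). -/
def psiF (θ : ℝ) (B₀ v : E3) : E3 := v + (1 - tanc θ) • cross3 B₀ (cross3 B₀ v)

/-- The filter matrix `Φ = I + (1 − sinc(θ)⁻¹) B̃₀²`, applied to a vector `v`. -/
def phiF (θ : ℝ) (B₀ v : E3) : E3 := v + (1 - (sinc3 θ)⁻¹) • cross3 B₀ (cross3 B₀ v)

/-- `A'(x)ᵀ v`: the transpose of the Jacobian of `A` at `x`, applied to `v`. -/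
def AT (A : E3 → E3) (x v : E3) : E3 := (ContinuousLinearMap.adjoint (fderiv ℝ A x)) v

/-- midpoint of two vectors -/
def mid (a b : E3) : E3 := (2:ℝ)⁻¹ • (a + b)

/-- curl of a vector field on ℝ³ -/
def curl3 (A : E3 → E3) (x : E3) : E3 :=
  (EuclideanSpace.equiv (Fin 3) ℝ).symm
    ![fderiv ℝ A x (EuclideanSpace.single 1 1) 2 - fderiv ℝ A x (EuclideanSpace.single 2 1) 1,
      fderiv ℝ A x (EuclideanSpace.single 2 1) 0 - fderiv ℝ A x (EuclideanSpace.single 0 1) 2,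
      fderiv ℝ A x (EuclideanSpace.single 0 1) 1 - fderiv ℝ A x (EuclideanSpace.single 1 1) 0]

/-- The two-step recurrence of the filtered variational integrator (FVI),
`x_{n+1} − 2x_n + x_{n−1} = Ψ( … )`, written with indices shifted by one. -/
def FVIstep (θ h : ℝ) (B₀ : E3) (A F : E3 → E3) (x : ℕ → E3) : Prop :=
  ∀ n : ℕ,
    x (n+2) - (2:ℝ) • x (n+1) + x n =
      psiF θ B₀
        ((h/2) • AT A (mid (x (n+1)) (x (n+2))) (x (n+2) - x (n+1))
          + (h/2) • AT A (mid (x n) (x (n+1))) (x (n+1) - x n)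
          - h • (A (mid (x (n+1)) (x (n+2))) - A (mid (x n) (x (n+1))))
          + (h^2/2) • (F (mid (x (n+1)) (x (n+2))) + F (mid (x n) (x (n+1)))))

/-- The defining relation for the starting value `x₁` of the FVI. -/
def FVIstart (θ h : ℝ) (B₀ : E3) (A F : E3 → E3) (p₀ : E3) (x : ℕ → E3) : Prop :=
  x 1 = x 0 + h • psiF θ B₀
    (p₀ + (2:ℝ)⁻¹ • AT A (mid (x 0) (x 1)) (x 1 - x 0)
      - A (mid (x 0) (x 1)) + (h/2) • F (mid (x 0) (x 1)))

/-- The velocity relation `(v_{n+1} + v_n)/2 = Φ (x_{n+1} − x_n)/h` of the FVI. -/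
def FVIvel (θ h : ℝ) (B₀ : E3) (x v : ℕ → E3) : Prop :=
  ∀ n : ℕ, (2:ℝ)⁻¹ • (v (n+1) + v n) = h⁻¹ • phiF θ B₀ (x (n+1) - x n)

/-- midpoint velocity `v_{n+1/2} = Φ (x_{n+1} − x_n)/h` -/
def vmid (θ h : ℝ) (B₀ : E3) (x : ℕ → E3) (n : ℕ) : E3 := h⁻¹ • phiF θ B₀ (x (n+1) - x n)

/-- orthogonal projection onto the span of `B₀` (for `‖B₀‖ = 1`) -/
def ppar (B₀ v : E3) : E3 := (inner ℝ B₀ v : ℝ) • B₀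

/-- the energy `H(x,v) = |v|²/2 + U(x)` -/
def energyH (U : E3 → ℝ) (x v : E3) : ℝ := ‖v‖^2/2 + U x

set_option maxHeartbeats 2000000

lemma mem_shift {s δ u : ℝ} (hu : u ∈ Set.uIcc (0:ℝ) δ) : s + u ∈ Set.uIcc s (s + δ) := by
  rcases Set.mem_uIcc.1 hu with ⟨h1, h2⟩ | ⟨h1, h2⟩
  · exact Set.mem_uIcc.2 (Or.inl ⟨by linarith, by linarith⟩)
  · exact Set.mem_uIcc.2 (Or.inr ⟨by linarith, by linarith⟩)

lemma poly_bound {f g : ℝ → E3} (k : ℕ) {K b : ℝ} (hK : 0 ≤ K)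
    (hf : ∀ u, HasDerivAt f (g u) u) (hg : Continuous g) (h0 : f 0 = 0)
    (hb : ∀ u ∈ Set.uIcc (0:ℝ) b, ‖g u‖ ≤ K * |u| ^ k) :
    ‖f b‖ ≤ K * |b| ^ (k + 1) / (k + 1) := by
  have _ := hK
  have hint : f b - f 0 = ∫ u in (0:ℝ)..b, g u :=
    (intervalIntegral.integral_eq_sub_of_hasDerivAt (fun u _ => hf u)
      (hg.intervalIntegrable _ _)).symm
  have hfb : f b = ∫ u in (0:ℝ)..b, g u := by rw [← hint, h0, sub_zero]
  rcases le_or_gt 0 b with hb0 | hb0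
  · calc ‖f b‖ = ‖∫ u in (0:ℝ)..b, g u‖ := by rw [hfb]
      _ ≤ ∫ u in (0:ℝ)..b, ‖g u‖ := intervalIntegral.norm_integral_le_integral_norm hb0
      _ ≤ ∫ u in (0:ℝ)..b, K * u ^ k := by
          apply intervalIntegral.integral_mono_on hb0
            (hg.norm.intervalIntegrable _ _)
            ((continuous_const.mul (continuous_pow k)).intervalIntegrable _ _)
          intro u hu
          have := hb u (by rw [Set.uIcc_of_le hb0]; exact hu)
          rwa [abs_of_nonneg hu.1] at this
      _ = K * (b ^ (k+1) - 0 ^ (k+1)) / (k+1) := by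
          rw [intervalIntegral.integral_const_mul, integral_pow]; ring
      _ = K * |b| ^ (k+1) / (k+1) := by rw [abs_of_nonneg hb0]; ring
  · have hb0' : b ≤ 0 := hb0.le
    calc ‖f b‖ = ‖∫ u in b..(0:ℝ), g u‖ := by
          rw [hfb, intervalIntegral.integral_symm, norm_neg]
      _ ≤ ∫ u in b..(0:ℝ), ‖g u‖ := intervalIntegral.norm_integral_le_integral_norm hb0'
      _ ≤ ∫ u in b..(0:ℝ), K * (-u) ^ k := by
          apply intervalIntegral.integral_mono_on hb0'
            (hg.norm.intervalIntegrable _ _)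
            (((continuous_const.mul (continuous_pow k)).comp continuous_neg).intervalIntegrable _ _)
          intro u hu
          have := hb u (by rw [Set.uIcc_of_ge hb0']; exact hu)
          rwa [abs_of_nonpos hu.2] at this
      _ = K * ((-b) ^ (k+1) - (-(0:ℝ)) ^ (k+1)) / (k+1) := by
          rw [intervalIntegral.integral_const_mul]
          rw [show (∫ u in b..(0:ℝ), (-u) ^ k) = ∫ u in (-(0:ℝ))..(-b), u ^ k from
            intervalIntegral.integral_comp_neg (fun u => u ^ k)]
          rw [integral_pow]; ring
      _ = K * |b| ^ (k+1) / (k+1) := by rw [abs_of_nonpos hb0']; ring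

lemma hasDerivAt_shift {f f1 : ℝ → E3} (hf : ∀ u, HasDerivAt f (f1 u) u) (s u : ℝ) :
    HasDerivAt (fun u => f (s + u)) (f1 (s + u)) u := by
  have := (hf (s + u)).scomp u ((hasDerivAt_id u).const_add s)
  simpa [Function.comp_def] using this

lemma uIcc_sub {s δ u : ℝ} (hu : u ∈ Set.uIcc (0:ℝ) δ) :
    Set.uIcc s (s + u) ⊆ Set.uIcc s (s + δ) :=
  Set.uIcc_subset_uIcc Set.left_mem_uIcc (mem_shift hu)

lemma hasDerivAt_sq_smul (c : E3) (u : ℝ) :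
    HasDerivAt (fun u : ℝ => (u ^ 2 / 2) • c) (u • c) u := by
  have h : HasDerivAt (fun u : ℝ => u ^ 2 / 2) u u := by
    have := (hasDerivAt_pow 2 u).div_const 2
    simpa using this
  simpa using h.smul_const c

lemma hasDerivAt_cube_smul (c : E3) (u : ℝ) :
    HasDerivAt (fun u : ℝ => (u ^ 3 / 6) • c) ((u ^ 2 / 2) • c) u := by
  have h : HasDerivAt (fun u : ℝ => u ^ 3 / 6) (u ^ 2 / 2) u := by
    have := (hasDerivAt_pow 3 u).div_const 6
    norm_num at this
    refine this.congr_deriv ?_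
    ring
  simpa using h.smul_const c

lemma taylor0 {f f1 : ℝ → E3} {M : ℝ}
    (hf : ∀ u, HasDerivAt f (f1 u) u) (hc1 : Continuous f1) (s δ : ℝ)
    (hM : ∀ u ∈ Set.uIcc s (s + δ), ‖f1 u‖ ≤ M) :
    ‖f (s + δ) - f s‖ ≤ M * |δ| := by
  have h0M : 0 ≤ M := le_trans (norm_nonneg _) (hM s Set.left_mem_uIcc)
  have := poly_bound (f := fun u => f (s + u) - f s) (g := fun u => f1 (s + u)) 0 h0M
    (fun u => (hasDerivAt_shift hf s u).sub_const _)
    (hc1.comp (continuous_const.add continuous_id)) (by simp)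
    (fun u hu => by simpa using hM (s + u) (mem_shift hu))
  simpa using this

lemma taylor1 {f f1 f2 : ℝ → E3} {M : ℝ}
    (hf : ∀ u, HasDerivAt f (f1 u) u) (hf1 : ∀ u, HasDerivAt f1 (f2 u) u)
    (hc2 : Continuous f2) (s δ : ℝ)
    (hM : ∀ u ∈ Set.uIcc s (s + δ), ‖f2 u‖ ≤ M) :
    ‖f (s + δ) - f s - δ • f1 s‖ ≤ M * |δ| ^ 2 / 2 := by
  have h0M : 0 ≤ M := le_trans (norm_nonneg _) (hM s Set.left_mem_uIcc)
  have hc1 : Continuous f1 :=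
    continuous_iff_continuousAt.2 fun u => (hf1 u).differentiableAt.continuousAt
  have := poly_bound (f := fun u => f (s + u) - f s - u • f1 s)
      (g := fun u => f1 (s + u) - f1 s) 1 (K := M) h0M
    (fun u => ((hasDerivAt_shift hf s u).sub_const _).sub
      (by simpa using (hasDerivAt_id u).smul_const (f1 s)))
    ((hc1.comp (continuous_const.add continuous_id)).sub continuous_const) (by simp)
    (fun u hu => by
      have := taylor0 hf1 hc2 s u (fun w hw => hM w (uIcc_sub hu hw))
      simpa using this)
  have e : M * |δ| ^ (1 + 1) / ((1:ℕ) + 1) = M * |δ| ^ 2 / 2 := by norm_num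
  exact e ▸ this

lemma taylor2 {f f1 f2 f3 : ℝ → E3} {M : ℝ}
    (hf : ∀ u, HasDerivAt f (f1 u) u) (hf1 : ∀ u, HasDerivAt f1 (f2 u) u)
    (hf2 : ∀ u, HasDerivAt f2 (f3 u) u) (hc3 : Continuous f3) (s δ : ℝ)
    (hM : ∀ u ∈ Set.uIcc s (s + δ), ‖f3 u‖ ≤ M) :
    ‖f (s + δ) - f s - δ • f1 s - (δ ^ 2 / 2) • f2 s‖ ≤ M * |δ| ^ 3 / 6 := by
  have h0M : 0 ≤ M := le_trans (norm_nonneg _) (hM s Set.left_mem_uIcc)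
  have hc2 : Continuous f2 :=
    continuous_iff_continuousAt.2 fun u => (hf2 u).differentiableAt.continuousAt
  have hc1 : Continuous f1 :=
    continuous_iff_continuousAt.2 fun u => (hf1 u).differentiableAt.continuousAt
  have key := poly_bound (f := fun u => f (s + u) - f s - u • f1 s - (u ^ 2 / 2) • f2 s)
      (g := fun u => f1 (s + u) - f1 s - u • f2 s) 2 (K := M / 2) (by positivity)
    (fun u => (((hasDerivAt_shift hf s u).sub_const _).sub
      (by simpa using (hasDerivAt_id u).smul_const (f1 s))).sub (hasDerivAt_sq_smul _ u))
    (((hc1.comp (continuous_const.add continuous_id)).sub continuous_const).sub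
      (continuous_id.smul continuous_const)) (by simp)
    (fun u hu => by
      have := taylor1 hf1 hf2 hc3 s u (fun w hw => hM w (uIcc_sub hu hw))
      calc ‖f1 (s + u) - f1 s - u • f2 s‖ ≤ M * |u| ^ 2 / 2 := this
        _ = M / 2 * |u| ^ 2 := by ring)
  have e : M / 2 * |δ| ^ (2 + 1) / ((2:ℕ) + 1) = M * |δ| ^ 3 / 6 := by norm_num; ring
  exact e ▸ key

lemma taylor3 {f f1 f2 f3 f4 : ℝ → E3} {M : ℝ}
    (hf : ∀ u, HasDerivAt f (f1 u) u) (hf1 : ∀ u, HasDerivAt f1 (f2 u) u)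
    (hf2 : ∀ u, HasDerivAt f2 (f3 u) u) (hf3 : ∀ u, HasDerivAt f3 (f4 u) u)
    (hc4 : Continuous f4) (s δ : ℝ)
    (hM : ∀ u ∈ Set.uIcc s (s + δ), ‖f4 u‖ ≤ M) :
    ‖f (s + δ) - f s - δ • f1 s - (δ ^ 2 / 2) • f2 s - (δ ^ 3 / 6) • f3 s‖
      ≤ M * |δ| ^ 4 / 24 := by
  have h0M : 0 ≤ M := le_trans (norm_nonneg _) (hM s Set.left_mem_uIcc)
  have hc1 : Continuous f1 :=
    continuous_iff_continuousAt.2 fun u => (hf1 u).differentiableAt.continuousAt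
  have hc2 : Continuous f2 :=
    continuous_iff_continuousAt.2 fun u => (hf2 u).differentiableAt.continuousAt
  have key := poly_bound
      (f := fun u => f (s + u) - f s - u • f1 s - (u ^ 2 / 2) • f2 s - (u ^ 3 / 6) • f3 s)
      (g := fun u => f1 (s + u) - f1 s - u • f2 s - (u ^ 2 / 2) • f3 s) 3 (K := M / 6)
      (by positivity)
    (fun u => ((((hasDerivAt_shift hf s u).sub_const _).sub
      (by simpa using (hasDerivAt_id u).smul_const (f1 s))).sub
      (hasDerivAt_sq_smul _ u)).sub (hasDerivAt_cube_smul _ u))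
    ((((hc1.comp (continuous_const.add continuous_id)).sub continuous_const).sub
      (continuous_id.smul continuous_const)).sub
      ((continuous_id.pow 2 |>.div_const 2).smul continuous_const)) (by simp)
    (fun u hu => by
      have := taylor2 hf1 hf2 hf3 hc4 s u (fun w hw => hM w (uIcc_sub hu hw))
      calc ‖f1 (s + u) - f1 s - u • f2 s - (u ^ 2 / 2) • f3 s‖ ≤ M * |u| ^ 3 / 6 := this
        _ = M / 6 * |u| ^ 3 := by ring)
  have e : M / 6 * |δ| ^ (3 + 1) / ((3:ℕ) + 1) = M * |δ| ^ 4 / 24 := by norm_num; ring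
  exact e ▸ key

lemma cross3_apply (a b : E3) (i : Fin 3) :
    cross3 a b i = ![a 1 * b 2 - a 2 * b 1, a 2 * b 0 - a 0 * b 2, a 0 * b 1 - a 1 * b 0] i := rfl

lemma norm_sq_e3 (v : E3) : ‖v‖ ^ 2 = v 0 ^ 2 + v 1 ^ 2 + v 2 ^ 2 := by
  rw [EuclideanSpace.norm_eq]
  rw [Real.sq_sqrt (by positivity)]
  simp [Fin.sum_univ_three, sq_abs]

lemma norm_cross3_le (a b : E3) : ‖cross3 a b‖ ≤ ‖a‖ * ‖b‖ := by
  have h1 : ‖cross3 a b‖ ^ 2 ≤ (‖a‖ * ‖b‖) ^ 2 := by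
    rw [norm_sq_e3, mul_pow, norm_sq_e3, norm_sq_e3]
    simp only [cross3_apply]
    simp only [Matrix.cons_val_zero, Matrix.cons_val_one, Matrix.head_cons,
      Matrix.cons_val_two, Matrix.tail_cons]
    nlinarith [sq_nonneg (a 0 * b 0 + a 1 * b 1 + a 2 * b 2), sq_nonneg (a 0 * b 1 - a 1 * b 0)]
  exact le_of_pow_le_pow_left₀ two_ne_zero (by positivity) h1

lemma tanc_bound {z : ℝ} (hz : 0 < z) (hz2 : z ≤ 1/2) : |tanc z - 1| ≤ z ^ 2 := by
  have hzne : z ≠ 0 := ne_of_gt hz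
  rw [tanc, if_neg hzne]
  have hcoslb : 1 - z ^ 2 / 2 ≤ Real.cos z := Real.one_sub_sq_div_two_le_cos
  have hcos : (7:ℝ)/8 ≤ Real.cos z := by nlinarith
  have hcos1 : Real.cos z ≤ 1 := Real.cos_le_one z
  have hsin_le : Real.sin z ≤ z := Real.sin_le hz.le
  have hsin_ge : z - z ^ 3 / 4 ≤ Real.sin z := (by nlinarith [Real.sin_gt_sub_cube hz, pow_pos hz 3])
  have htan : Real.tan z = Real.sin z / Real.cos z := Real.tan_eq_sin_div_cos z
  have hkey : |Real.tan z - z| ≤ z ^ 3 := by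
    rw [htan]
    rw [div_sub' (ne_of_gt (by linarith))]
    rw [abs_div]
    rw [abs_of_pos (by linarith : (0:ℝ) < Real.cos z)]
    rw [div_le_iff₀ (by linarith)]
    rw [abs_le]
    have hz3 : 0 < z ^ 3 := by positivity
    constructor <;> nlinarith
  have e1 : Real.tan z / z - 1 = (Real.tan z - z) / z := by field_simp
  rw [e1, abs_div, abs_of_pos hz, div_le_iff₀ hz]
  calc |Real.tan z - z| ≤ z ^ 3 := hkey
    _ = z ^ 2 * z := by ring

lemma e3_decomp (v : E3) :
    v = v 0 • EuclideanSpace.single 0 1 + v 1 • EuclideanSpace.single 1 1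
      + v 2 • EuclideanSpace.single 2 1 := by
  ext i
  fin_cases i <;> simp [EuclideanSpace.single_apply]

lemma adjoint_apply_comp (L : E3 →L[ℝ] E3) (v : E3) (i : Fin 3) :
    (ContinuousLinearMap.adjoint L) v i
      = v 0 * L (EuclideanSpace.single i 1) 0 + v 1 * L (EuclideanSpace.single i 1) 1
        + v 2 * L (EuclideanSpace.single i 1) 2 := by
  have h1 : (ContinuousLinearMap.adjoint L) v i
      = ⟪(ContinuousLinearMap.adjoint L) v, EuclideanSpace.single i 1⟫ := by
    rw [EuclideanSpace.inner_single_right]; simp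
  rw [h1, ContinuousLinearMap.adjoint_inner_left]
  rw [PiLp.inner_apply]
  simp [Fin.sum_univ_three, mul_comm]

lemma clm_apply_comp (L : E3 →L[ℝ] E3) (v : E3) (i : Fin 3) :
    L v i = v 0 * L (EuclideanSpace.single 0 1) i + v 1 * L (EuclideanSpace.single 1 1) i
      + v 2 * L (EuclideanSpace.single 2 1) i := by
  conv_lhs => rw [e3_decomp v]
  rw [map_add, map_add, map_smul, map_smul, map_smul]
  simp

lemma cross3_curl3 (A : E3 → E3) (x v : E3) :
    cross3 v (curl3 A x) = AT A x v - fderiv ℝ A x v := by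
  set L := fderiv ℝ A x with hLdef
  ext i
  have hs : (AT A x v - L v) i = (ContinuousLinearMap.adjoint L) v i - L v i := rfl
  rw [hs, clm_apply_comp L v i, adjoint_apply_comp L v i]
  have hcr : ∀ j : Fin 3, cross3 v (curl3 A x) j
      = ![v 1 * curl3 A x 2 - v 2 * curl3 A x 1, v 2 * curl3 A x 0 - v 0 * curl3 A x 2,
          v 0 * curl3 A x 1 - v 1 * curl3 A x 0] j := fun j => rfl
  have hc0 : curl3 A x 0 = L (EuclideanSpace.single 1 1) 2 - L (EuclideanSpace.single 2 1) 1 := rfl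
  have hc1 : curl3 A x 1 = L (EuclideanSpace.single 2 1) 0 - L (EuclideanSpace.single 0 1) 2 := rfl
  have hc2 : curl3 A x 2 = L (EuclideanSpace.single 0 1) 1 - L (EuclideanSpace.single 1 1) 0 := rfl
  rw [hcr i]
  fin_cases i <;> simp [hc0, hc1, hc2] <;> ring

lemma AT_norm_le (A : E3 → E3) (y v : E3) : ‖AT A y v‖ ≤ ‖fderiv ℝ A y‖ * ‖v‖ := by
  calc ‖AT A y v‖ ≤ ‖ContinuousLinearMap.adjoint (fderiv ℝ A y)‖ * ‖v‖ :=
        ContinuousLinearMap.le_opNorm _ v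
    _ = ‖fderiv ℝ A y‖ * ‖v‖ := by
        rw [LinearIsometryEquiv.norm_map (ContinuousLinearMap.adjoint)]

lemma AT_sub_le (A : E3 → E3) (y z v : E3) :
    ‖AT A y v - AT A z v‖ ≤ ‖fderiv ℝ A y - fderiv ℝ A z‖ * ‖v‖ := by
  have h : AT A y v - AT A z v
      = (ContinuousLinearMap.adjoint (fderiv ℝ A y - fderiv ℝ A z)) v := by
    rw [map_sub]; rfl
  rw [h]
  calc ‖(ContinuousLinearMap.adjoint (fderiv ℝ A y - fderiv ℝ A z)) v‖
      ≤ ‖ContinuousLinearMap.adjoint (fderiv ℝ A y - fderiv ℝ A z)‖ * ‖v‖ :=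
        ContinuousLinearMap.le_opNorm _ v
    _ = ‖fderiv ℝ A y - fderiv ℝ A z‖ * ‖v‖ := by
        rw [LinearIsometryEquiv.norm_map (ContinuousLinearMap.adjoint)]

def adjCLM : (E3 →L[ℝ] E3) →L[ℝ] (E3 →L[ℝ] E3) :=
  LinearMap.mkContinuous
    { toFun := fun L => ContinuousLinearMap.adjoint L
      map_add' := fun L M => map_add _ L M
      map_smul' := fun c L => by
        have := LinearIsometryEquiv.map_smulₛₗ
          (ContinuousLinearMap.adjoint : (E3 →L[ℝ] E3) ≃ₗᵢ⋆[ℝ] (E3 →L[ℝ] E3)) c L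
        simpa using this }
    1 (fun L => by
      rw [one_mul]
      exact le_of_eq (LinearIsometryEquiv.norm_map (ContinuousLinearMap.adjoint) L))

lemma seg_norm {z y w : E3} (hw : w ∈ segment ℝ z y) : ‖w - z‖ ≤ ‖y - z‖ := by
  rcases hw with ⟨a, b, ha, hb, hab, rfl⟩
  have h : a • z + b • y - z = b • (y - z) := by
    have : a = 1 - b := by linarith
    rw [this]; module
  rw [h, norm_smul, Real.norm_eq_abs, abs_of_nonneg hb]
  nlinarith [norm_nonneg (y - z)]

lemma quad_bound {A : E3 → E3} (hA : Differentiable ℝ A) {L' : ℝ} {y z : E3}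
    (hLip : ∀ w ∈ segment ℝ z y, ‖fderiv ℝ A w - fderiv ℝ A z‖ ≤ L') :
    ‖A y - A z - fderiv ℝ A z (y - z)‖ ≤ L' * ‖y - z‖ := by
  set g := fun w => A w - fderiv ℝ A z w with hg
  have hgd : ∀ w ∈ segment ℝ z y, DifferentiableAt ℝ g w :=
    fun w _ => (hA w).sub (fderiv ℝ A z).differentiableAt
  have hgder : ∀ w ∈ segment ℝ z y, ‖fderiv ℝ g w‖ ≤ L' := by
    intro w hw
    have : fderiv ℝ g w = fderiv ℝ A w - fderiv ℝ A z := by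
      rw [hg, fderiv_fun_sub (hA w) (fderiv ℝ A z).differentiableAt,
        ContinuousLinearMap.fderiv]
    rw [this]; exact hLip w hw
  have := Convex.norm_image_sub_le_of_norm_fderiv_le hgd hgder (convex_segment z y)
    (left_mem_segment ℝ z y) (right_mem_segment ℝ z y)
  have he : g y - g z = A y - A z - fderiv ℝ A z (y - z) := by
    rw [hg]
    simp only [map_sub]
    module
  rwa [he] at this

lemma derivChain {f : ℝ → E3} {n : WithTop ℕ∞} (hf : ContDiff ℝ (n + 1) f) :
    (∀ s, HasDerivAt f (deriv f s) s) ∧ ContDiff ℝ n (deriv f) := by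
  rw [contDiff_succ_iff_deriv] at hf
  exact ⟨fun s => (hf.1 s).hasDerivAt, hf.2.2⟩

lemma bound_compact {X E : Type*} [TopologicalSpace X] [NormedAddCommGroup E] {K : Set X}
    (hK : IsCompact K) {g : X → E} (hg : Continuous g) :
    ∃ M : ℝ, 0 ≤ M ∧ ∀ y ∈ K, ‖g y‖ ≤ M := by
  obtain ⟨M, hM⟩ := hK.exists_bound_of_continuousOn hg.continuousOn
  exact ⟨max M 0, le_max_right _ _, fun y hy => (hM y hy).trans (le_max_left _ _)⟩

/-- local truncation error of the FVI, ε = 1.  For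
`A ∈ C⁴`, `F ∈ C³` and a `C⁵` solution `x` of `ẍ = ẋ × (∇×A)(x) + F(x)` on `[0,T]`,
the defect obtained by inserting the exact solution into the filtered two-step
scheme is of size `O(h⁴)`. -/
theorem stmt19
    (T : ℝ) (hT : 0 < T)
    (B₀ : E3) (hB₀ : ‖B₀‖ = 1)
    (A F : E3 → E3) (hA : ContDiff ℝ 4 A) (hF : ContDiff ℝ 3 F)
    (x : ℝ → E3) (hx : ContDiff ℝ 5 x)
    (hode : ∀ t ∈ Set.Icc (0:ℝ) T,
      deriv (deriv x) t = cross3 (deriv x t) (curl3 A (x t)) + F (x t)) :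
    ∃ C > (0:ℝ), ∃ h₀ > (0:ℝ),
      ∀ h : ℝ, 0 < h → h ≤ h₀ →
      ∀ n : ℕ, 1 ≤ n → ((n:ℝ) + 1) * h ≤ T →
        ‖x (((n:ℝ) + 1) * h) - (2:ℝ) • x ((n:ℝ) * h) + x (((n:ℝ) - 1) * h)
          - psiF (h/2) B₀
              ((h/2) • AT A (mid (x ((n:ℝ) * h)) (x (((n:ℝ) + 1) * h)))
                  (x (((n:ℝ) + 1) * h) - x ((n:ℝ) * h))
                + (h/2) • AT A (mid (x (((n:ℝ) - 1) * h)) (x ((n:ℝ) * h)))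
                  (x ((n:ℝ) * h) - x (((n:ℝ) - 1) * h))
                - h • (A (mid (x ((n:ℝ) * h)) (x (((n:ℝ) + 1) * h)))
                    - A (mid (x (((n:ℝ) - 1) * h)) (x ((n:ℝ) * h))))
                + (h^2/2) • (F (mid (x ((n:ℝ) * h)) (x (((n:ℝ) + 1) * h)))
                    + F (mid (x (((n:ℝ) - 1) * h)) (x ((n:ℝ) * h)))))‖
          ≤ C * h^4 := by
  classical
  have hT0 : (0:ℝ) ≤ T := hT.le
  have hIc : IsCompact (Set.Icc (0:ℝ) T) := isCompact_Icc
  have hcast5 : ((4 : WithTop ℕ∞) + 1) = 5 := by norm_num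
  have hcast4 : ((3 : WithTop ℕ∞) + 1) = 4 := by norm_num
  have hcast3 : ((2 : WithTop ℕ∞) + 1) = 3 := by norm_num
  have hcast2 : ((1 : WithTop ℕ∞) + 1) = 2 := by norm_num
  have hcast1 : ((0 : WithTop ℕ∞) + 1) = 1 := by norm_num
  -- derivative chain of x
  obtain ⟨hdx, hcd4⟩ := derivChain (n := 4) (hcast5 ▸ hx)
  set d1 : ℝ → E3 := deriv x with hd1def
  obtain ⟨hdd1, hcd3⟩ := derivChain (n := 3) (hcast4 ▸ hcd4)
  set d2 : ℝ → E3 := deriv d1 with hd2def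
  obtain ⟨hdd2, hcd2⟩ := derivChain (n := 2) (hcast3 ▸ hcd3)
  set d3 : ℝ → E3 := deriv d2 with hd3def
  obtain ⟨hdd3, hcd1⟩ := derivChain (n := 1) (hcast2 ▸ hcd2)
  set d4 : ℝ → E3 := deriv d3 with hd4def
  have hc1 : Continuous d1 := hcd4.continuous
  have hc2 : Continuous d2 := hcd3.continuous
  have hc3 : Continuous d3 := hcd2.continuous
  have hc4 : Continuous d4 := hcd1.continuous
  -- composite functions
  set q : ℝ → E3 := fun s => A (x s) with hqdef
  have hqcd : ContDiff ℝ 4 q := hA.comp (hx.of_le (by norm_num))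
  obtain ⟨hdq, hqcd3⟩ := derivChain (n := 3) (hcast4 ▸ hqcd)
  set q1 : ℝ → E3 := deriv q with hq1def
  obtain ⟨hdq1, hqcd2⟩ := derivChain (n := 2) (hcast3 ▸ hqcd3)
  set q2 : ℝ → E3 := deriv q1 with hq2def
  obtain ⟨hdq2, hqcd1⟩ := derivChain (n := 1) (hcast2 ▸ hqcd2)
  set q3 : ℝ → E3 := deriv q2 with hq3def
  have hcq3 : Continuous q3 := hqcd1.continuous
  have hq1eq : ∀ s, q1 s = fderiv ℝ A (x s) (d1 s) := by
    intro s
    have hAd : HasFDerivAt A (fderiv ℝ A (x s)) (x s) :=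
      ((hA.differentiable (by norm_num)) (x s)).hasFDerivAt
    have := (hAd.comp_hasDerivAt s (hdx s)).deriv
    simpa [hq1def, hqdef, Function.comp_def] using this
  have hA' : ContDiff ℝ 3 (fderiv ℝ A) := hA.fderiv_right (by norm_num)
  -- p
  set p : ℝ → E3 := fun s => adjCLM (fderiv ℝ A (x s)) (d1 s) with hpdef
  have hpAT : ∀ s, p s = AT A (x s) (d1 s) := fun s => rfl
  have hpcd : ContDiff ℝ 2 p := by
    apply ContDiff.clm_apply
    · exact (adjCLM.contDiff).comp ((hA'.comp (hx.of_le (by norm_num))).of_le (by norm_num))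
    · exact hcd4.of_le (by norm_num)
  obtain ⟨hdp, hpcd1⟩ := derivChain (n := 1) (hcast2 ▸ hpcd)
  set p1 : ℝ → E3 := deriv p with hp1def
  obtain ⟨hdp1, hpcd0⟩ := derivChain (n := 0) (hcast1 ▸ hpcd1)
  set p2 : ℝ → E3 := deriv p1 with hp2def
  have hcp2 : Continuous p2 := hpcd0.continuous
  -- G
  set G : ℝ → E3 := fun s => F (x s) with hGdef
  have hGcd : ContDiff ℝ 3 G := hF.comp (hx.of_le (by norm_num))
  obtain ⟨hdG, hGcd2⟩ := derivChain (n := 2) (hcast3 ▸ hGcd)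
  set G1 : ℝ → E3 := deriv G with hG1def
  obtain ⟨hdG1, hGcd1⟩ := derivChain (n := 1) (hcast2 ▸ hGcd2)
  set G2 : ℝ → E3 := deriv G1 with hG2def
  have hcG2 : Continuous G2 := hGcd1.continuous
  -- gamma
  set γ : ℝ → E3 := fun s => fderiv ℝ A (x s) (d2 s) with hγdef
  have hγcd : ContDiff ℝ 1 γ := by
    apply ContDiff.clm_apply
    · exact (hA'.comp (hx.of_le (by norm_num))).of_le (by norm_num)
    · exact hcd3.of_le (by norm_num)
  obtain ⟨hdγ, hγcd0⟩ := derivChain (n := 0) (hcast1 ▸ hγcd)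
  set γ1 : ℝ → E3 := deriv γ with hγ1def
  have hcγ1 : Continuous γ1 := hγcd0.continuous
  -- time bounds
  obtain ⟨M1, hM1n, hM1⟩ := bound_compact hIc hc1
  obtain ⟨M2, hM2n, hM2⟩ := bound_compact hIc hc2
  obtain ⟨M3, hM3n, hM3⟩ := bound_compact hIc hc3
  obtain ⟨M4, hM4n, hM4⟩ := bound_compact hIc hc4
  obtain ⟨Mq3, hMq3n, hMq3⟩ := bound_compact hIc hcq3
  obtain ⟨Mp2, hMp2n, hMp2⟩ := bound_compact hIc hcp2
  obtain ⟨MG2, hMG2n, hMG2⟩ := bound_compact hIc hcG2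
  obtain ⟨Mγ1, hMγ1n, hMγ1⟩ := bound_compact hIc hcγ1
  -- space compact set
  obtain ⟨R, hR0, hR⟩ := bound_compact hIc hx.continuous
  set K : Set E3 := Metric.closedBall (0:E3) R with hKdef
  have hKc : IsCompact K := isCompact_closedBall _ _
  have hKconv : Convex ℝ K := convex_closedBall _ _
  have hxK : ∀ s ∈ Set.Icc (0:ℝ) T, x s ∈ K := fun s hs =>
    mem_closedBall_zero_iff.2 (hR s hs)
  obtain ⟨NA, hNA0, hNA⟩ := bound_compact hKc hA'.continuous
  obtain ⟨LA, hLA0, hLA⟩ :=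
    bound_compact hKc (hA'.fderiv_right (m := 2) (by norm_num)).continuous
  have hdiffA' : ∀ w : E3, DifferentiableAt ℝ (fderiv ℝ A) w := fun w =>
    (hA'.differentiable (by norm_num)) w
  have hLipA' : ∀ y ∈ K, ∀ z ∈ K, ‖fderiv ℝ A y - fderiv ℝ A z‖ ≤ LA * ‖y - z‖ :=
    fun y hy z hz => Convex.norm_image_sub_le_of_norm_fderiv_le
      (fun w _ => hdiffA' w) (fun w hw => hLA w hw) hKconv hz hy
  obtain ⟨NF, hNF0, hNF⟩ := bound_compact hKc hF.continuous
  obtain ⟨LF, hLF0, hLFb⟩ :=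
    bound_compact hKc (hF.fderiv_right (m := 2) (by norm_num)).continuous
  have hLipF : ∀ y ∈ K, ∀ z ∈ K, ‖F y - F z‖ ≤ LF * ‖y - z‖ :=
    fun y hy z hz => Convex.norm_image_sub_le_of_norm_fderiv_le
      (fun w _ => (hF.differentiable (by norm_num)) w) (fun w hw => hLFb w hw) hKconv hz hy
  have hLipA : ∀ y ∈ K, ∀ z ∈ K, ‖A y - A z‖ ≤ NA * ‖y - z‖ :=
    fun y hy z hz => Convex.norm_image_sub_le_of_norm_fderiv_le
      (fun w _ => (hA.differentiable (by norm_num)) w) (fun w hw => hNA w hw) hKconv hz hy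
  -- constants
  set Cb : ℝ := M2/8 + M3/48 with hCbdef
  set c1 : ℝ := (LA*Cb*M1 + NA*M3/24)/2 with hc1def
  set cT3 : ℝ := Mp2/8 with hcT3def
  set cq : ℝ := Mq3/24 + 2*LA*Cb^2 + NA*M3/24 + Mγ1/8 with hcqdef
  set cF5 : ℝ := LF*Cb + MG2/8 with hcF5def
  set cS : ℝ := 2*NA*M1 + NF with hcSdef
  set CC : ℝ := M4/12 + 2*c1 + cT3 + cq + cF5 + cS/4 + 1 with hCCdef
  clear_value Cb c1 cT3 cq cF5 cS CC
  have hCb0 : 0 ≤ Cb := by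
    rw [hCbdef]
    have := div_nonneg hM2n (by norm_num : (0:ℝ) ≤ 8)
    have := div_nonneg hM3n (by norm_num : (0:ℝ) ≤ 48)
    linarith
  have hc10 : 0 ≤ c1 := by
    rw [hc1def]
    have h1 := mul_nonneg (mul_nonneg hLA0 hCb0) hM1n
    have h2 := div_nonneg (mul_nonneg hNA0 hM3n) (by norm_num : (0:ℝ) ≤ 24)
    linarith
  have hcT30 : 0 ≤ cT3 := by rw [hcT3def]; exact div_nonneg hMp2n (by norm_num)
  have hcq0 : 0 ≤ cq := by
    rw [hcqdef]
    have h1 : 0 ≤ Mq3/24 := div_nonneg hMq3n (by norm_num)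
    have h2 : 0 ≤ 2*LA*Cb^2 := mul_nonneg (by linarith) (sq_nonneg _)
    have h3 : 0 ≤ NA*M3/24 := div_nonneg (mul_nonneg hNA0 hM3n) (by norm_num)
    have h4 : 0 ≤ Mγ1/8 := div_nonneg hMγ1n (by norm_num)
    linarith
  have hcF50 : 0 ≤ cF5 := by
    rw [hcF5def]
    have h1 := mul_nonneg hLF0 hCb0
    have h2 := div_nonneg hMG2n (by norm_num : (0:ℝ) ≤ 8)
    linarith
  have hcS0 : 0 ≤ cS := by
    rw [hcSdef]
    have h1 := mul_nonneg (mul_nonneg (by norm_num : (0:ℝ) ≤ 2) hNA0) hM1n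
    linarith
  have hCC0 : 0 < CC := by
    rw [hCCdef]
    have h0 : 0 ≤ M4/12 := div_nonneg hM4n (by norm_num)
    have h5 : 0 ≤ cS/4 := div_nonneg hcS0 (by norm_num)
    linarith
  refine ⟨CC, hCC0, 1, one_pos, ?_⟩
  intro h hh hh1 n hn hnT
  set t : ℝ := (n:ℝ) * h with htdef
  have hn1 : (1:ℝ) ≤ (n:ℝ) := by exact_mod_cast hn
  have ep : ((n:ℝ)+1)*h = t + h := by rw [htdef]; ring
  have em : ((n:ℝ)-1)*h = t - h := by rw [htdef]; ring
  rw [ep] at hnT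
  rw [ep, em]
  have hth0 : 0 ≤ t - h := by
    rw [htdef]
    have h1 := mul_le_mul_of_nonneg_right hn1 hh.le
    linarith only [h1]
  clear_value t
  have hthT : t + h ≤ T := hnT
  have h2pos : (0:ℝ) < h/2 := by linarith only [hh]
  set s0 : ℝ := t + h/2 with hs0def
  set s1 : ℝ := t - h/2 with hs1def
  clear_value s0 s1
  have hsubI : ∀ a b : ℝ, t - h ≤ a → a ≤ t + h → t - h ≤ b → b ≤ t + h →
      Set.uIcc a b ⊆ Set.Icc (0:ℝ) T := by
    intro a b ha1 ha2 hb1 hb2 u hu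
    rcases Set.mem_uIcc.1 hu with ⟨u1, u2⟩ | ⟨u1, u2⟩ <;>
      exact ⟨by linarith only [u1, u2, ha1, ha2, hb1, hb2, hth0, hthT, hT0],
        by linarith only [u1, u2, ha1, ha2, hb1, hb2, hth0, hthT, hT0]⟩
  have habs : |h| = h := abs_of_pos hh
  have habsn : |(-h)| = h := by rw [abs_neg]; exact habs
  have habs2 : |h/2| = h/2 := abs_of_pos h2pos
  have habsn2 : |(-(h/2))| = h/2 := by rw [abs_neg]; exact habs2
  have habs2h : |2*h| = 2*h := abs_of_pos (by linarith only [hh, hh1, hth0, hthT, hT0, h2pos])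
  have htI : t ∈ Set.Icc (0:ℝ) T := ⟨by linarith only [hh, hh1, hth0, hthT, hT0, h2pos], by linarith only [hh, hh1, hth0, hthT, hT0, h2pos]⟩
  have htpI : t + h ∈ Set.Icc (0:ℝ) T := ⟨by linarith only [hh, hh1, hth0, hthT, hT0, h2pos], by linarith only [hh, hh1, hth0, hthT, hT0, h2pos]⟩
  have htmI : t - h ∈ Set.Icc (0:ℝ) T := ⟨by linarith only [hh, hh1, hth0, hthT, hT0, h2pos], by linarith only [hh, hh1, hth0, hthT, hT0, h2pos]⟩
  have hs0I : s0 ∈ Set.Icc (0:ℝ) T := ⟨by rw [hs0def]; linarith only [hh, hh1, hth0, hthT, hT0, h2pos], by rw [hs0def]; linarith only [hh, hh1, hth0, hthT, hT0, h2pos]⟩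
  have hs1I : s1 ∈ Set.Icc (0:ℝ) T := ⟨by rw [hs1def]; linarith only [hh, hh1, hth0, hthT, hT0, h2pos], by rw [hs1def]; linarith only [hh, hh1, hth0, hthT, hT0, h2pos]⟩
  -- memberships in K
  have hx0K : x t ∈ K := hxK t htI
  have hxpK : x (t+h) ∈ K := hxK _ htpI
  have hxmK : x (t-h) ∈ K := hxK _ htmI
  have hxs0K : x s0 ∈ K := hxK _ hs0I
  have hxs1K : x s1 ∈ K := hxK _ hs1I
  have hmid : ∀ a b : E3, mid a b = (2:ℝ)⁻¹ • a + (2:ℝ)⁻¹ • b := fun a b => smul_add _ a b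
  have hmidK : ∀ a b : E3, a ∈ K → b ∈ K → mid a b ∈ K := by
    intro a b ha hb
    rw [hmid]
    exact hKconv ha hb (by norm_num) (by norm_num) (by norm_num)
  have hmpK : mid (x t) (x (t+h)) ∈ K := hmidK _ _ hx0K hxpK
  have hmmK : mid (x (t-h)) (x t) ∈ K := hmidK _ _ hxmK hx0K
  -- first-order crude bounds
  have W1 : ‖x (t+h) - x t‖ ≤ M1 * h := by
    have := taylor0 hdx hc1 t h (fun u hu => hM1 u
      (hsubI t (t+h) (by linarith only [hh, hh1, hth0, hthT, hT0, h2pos]) (by linarith only [hh, hh1, hth0, hthT, hT0, h2pos]) (by linarith only [hh, hh1, hth0, hthT, hT0, h2pos]) (by linarith only [hh, hh1, hth0, hthT, hT0, h2pos]) hu))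
    rwa [habs] at this
  have W2 : ‖x t - x (t-h)‖ ≤ M1 * h := by
    have := taylor0 hdx hc1 t (-h) (fun u hu => hM1 u
      (hsubI t (t+(-h)) (by linarith only [hh, hh1, hth0, hthT, hT0, h2pos]) (by linarith only [hh, hh1, hth0, hthT, hT0, h2pos]) (by linarith only [hh, hh1, hth0, hthT, hT0, h2pos]) (by linarith only [hh, hh1, hth0, hthT, hT0, h2pos]) hu))
    rw [show t + -h = t - h from by ring, habsn] at this
    rw [← norm_neg]
    simpa [neg_sub] using this
  have W3 : ‖x (t+h) - x (t-h)‖ ≤ M1 * (2*h) := by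
    have := taylor0 hdx hc1 (t-h) (2*h) (fun u hu => hM1 u
      (hsubI (t-h) (t-h+2*h) (by linarith only [hh, hh1, hth0, hthT, hT0, h2pos]) (by linarith only [hh, hh1, hth0, hthT, hT0, h2pos]) (by linarith only [hh, hh1, hth0, hthT, hT0, h2pos]) (by linarith only [hh, hh1, hth0, hthT, hT0, h2pos]) hu))
    rw [show t - h + 2*h = t + h from by ring, habs2h] at this
    exact this
  -- third-order expansions of x at t
  have B1 : ‖x (t+h) - x t - h • d1 t - (h^2/2) • d2 t - (h^3/6) • d3 t‖ ≤ M4*h^4/24 := by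
    have := taylor3 hdx hdd1 hdd2 hdd3 hc4 t h (fun u hu => hM4 u
      (hsubI t (t+h) (by linarith only [hh, hh1, hth0, hthT, hT0, h2pos]) (by linarith only [hh, hh1, hth0, hthT, hT0, h2pos]) (by linarith only [hh, hh1, hth0, hthT, hT0, h2pos]) (by linarith only [hh, hh1, hth0, hthT, hT0, h2pos]) hu))
    rwa [habs] at this
  have B2 : ‖x (t-h) - x t - (-h) • d1 t - ((-h)^2/2) • d2 t - ((-h)^3/6) • d3 t‖
      ≤ M4*h^4/24 := by
    have := taylor3 hdx hdd1 hdd2 hdd3 hc4 t (-h) (fun u hu => hM4 u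
      (hsubI t (t+(-h)) (by linarith only [hh, hh1, hth0, hthT, hT0, h2pos]) (by linarith only [hh, hh1, hth0, hthT, hT0, h2pos]) (by linarith only [hh, hh1, hth0, hthT, hT0, h2pos]) (by linarith only [hh, hh1, hth0, hthT, hT0, h2pos]) hu))
    rwa [show t + -h = t - h from by ring, habsn] at this
  have hD : ‖x (t+h) - (2:ℝ) • x t + x (t-h) - (h^2) • d2 t‖ ≤ M4*h^4/12 := by
    have e : x (t+h) - (2:ℝ) • x t + x (t-h) - (h^2) • d2 t
        = (x (t+h) - x t - h • d1 t - (h^2/2) • d2 t - (h^3/6) • d3 t)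
          + (x (t-h) - x t - (-h) • d1 t - ((-h)^2/2) • d2 t - ((-h)^3/6) • d3 t) := by
      module
    calc ‖x (t+h) - (2:ℝ) • x t + x (t-h) - (h^2) • d2 t‖
        = ‖(x (t+h) - x t - h • d1 t - (h^2/2) • d2 t - (h^3/6) • d3 t)
          + (x (t-h) - x t - (-h) • d1 t - ((-h)^2/2) • d2 t - ((-h)^3/6) • d3 t)‖ := by rw [e]
      _ ≤ ‖x (t+h) - x t - h • d1 t - (h^2/2) • d2 t - (h^3/6) • d3 t‖
          + ‖x (t-h) - x t - (-h) • d1 t - ((-h)^2/2) • d2 t - ((-h)^3/6) • d3 t‖ :=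
        norm_add_le _ _
      _ ≤ M4*h^4/24 + M4*h^4/24 := add_le_add B1 B2
      _ = M4*h^4/12 := by ring
  -- second-order expansions of x at s0 and s1
  have P1 : ‖x (t+h) - x s0 - (h/2) • d1 s0 - ((h/2)^2/2) • d2 s0‖ ≤ M3*(h/2)^3/6 := by
    have := taylor2 hdx hdd1 hdd2 hc3 s0 (h/2) (fun u hu => hM3 u
      (hsubI s0 (s0+h/2) (by rw [hs0def]; linarith only [hh, hh1, hth0, hthT, hT0, h2pos]) (by rw [hs0def]; linarith only [hh, hh1, hth0, hthT, hT0, h2pos])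
        (by rw [hs0def]; linarith only [hh, hh1, hth0, hthT, hT0, h2pos]) (by rw [hs0def]; linarith only [hh, hh1, hth0, hthT, hT0, h2pos]) hu))
    rwa [show s0 + h/2 = t + h from by rw [hs0def]; ring, habs2] at this
  have P2 : ‖x t - x s0 - (-(h/2)) • d1 s0 - ((-(h/2))^2/2) • d2 s0‖ ≤ M3*(h/2)^3/6 := by
    have := taylor2 hdx hdd1 hdd2 hc3 s0 (-(h/2)) (fun u hu => hM3 u
      (hsubI s0 (s0+(-(h/2))) (by rw [hs0def]; linarith only [hh, hh1, hth0, hthT, hT0, h2pos]) (by rw [hs0def]; linarith only [hh, hh1, hth0, hthT, hT0, h2pos])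
        (by rw [hs0def]; linarith only [hh, hh1, hth0, hthT, hT0, h2pos]) (by rw [hs0def]; linarith only [hh, hh1, hth0, hthT, hT0, h2pos]) hu))
    rwa [show s0 + -(h/2) = t from by rw [hs0def]; ring, habsn2] at this
  have P3 : ‖x t - x s1 - (h/2) • d1 s1 - ((h/2)^2/2) • d2 s1‖ ≤ M3*(h/2)^3/6 := by
    have := taylor2 hdx hdd1 hdd2 hc3 s1 (h/2) (fun u hu => hM3 u
      (hsubI s1 (s1+h/2) (by rw [hs1def]; linarith only [hh, hh1, hth0, hthT, hT0, h2pos]) (by rw [hs1def]; linarith only [hh, hh1, hth0, hthT, hT0, h2pos])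
        (by rw [hs1def]; linarith only [hh, hh1, hth0, hthT, hT0, h2pos]) (by rw [hs1def]; linarith only [hh, hh1, hth0, hthT, hT0, h2pos]) hu))
    rwa [show s1 + h/2 = t from by rw [hs1def]; ring, habs2] at this
  have P4 : ‖x (t-h) - x s1 - (-(h/2)) • d1 s1 - ((-(h/2))^2/2) • d2 s1‖ ≤ M3*(h/2)^3/6 := by
    have := taylor2 hdx hdd1 hdd2 hc3 s1 (-(h/2)) (fun u hu => hM3 u
      (hsubI s1 (s1+(-(h/2))) (by rw [hs1def]; linarith only [hh, hh1, hth0, hthT, hT0, h2pos]) (by rw [hs1def]; linarith only [hh, hh1, hth0, hthT, hT0, h2pos])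
        (by rw [hs1def]; linarith only [hh, hh1, hth0, hthT, hT0, h2pos]) (by rw [hs1def]; linarith only [hh, hh1, hth0, hthT, hT0, h2pos]) hu))
    rwa [show s1 + -(h/2) = t - h from by rw [hs1def]; ring, habsn2] at this
  have B5 : ‖x (t+h) - x t - h • d1 s0‖ ≤ M3*h^3/24 := by
    have e : x (t+h) - x t - h • d1 s0
        = (x (t+h) - x s0 - (h/2) • d1 s0 - ((h/2)^2/2) • d2 s0)
          - (x t - x s0 - (-(h/2)) • d1 s0 - ((-(h/2))^2/2) • d2 s0) := by module
    calc ‖x (t+h) - x t - h • d1 s0‖ = _ := congrArg norm e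
      _ ≤ ‖x (t+h) - x s0 - (h/2) • d1 s0 - ((h/2)^2/2) • d2 s0‖
          + ‖x t - x s0 - (-(h/2)) • d1 s0 - ((-(h/2))^2/2) • d2 s0‖ := norm_sub_le _ _
      _ ≤ M3*(h/2)^3/6 + M3*(h/2)^3/6 := add_le_add P1 P2
      _ = M3*h^3/24 := by ring
  have B5' : ‖x t - x (t-h) - h • d1 s1‖ ≤ M3*h^3/24 := by
    have e : x t - x (t-h) - h • d1 s1
        = (x t - x s1 - (h/2) • d1 s1 - ((h/2)^2/2) • d2 s1)
          - (x (t-h) - x s1 - (-(h/2)) • d1 s1 - ((-(h/2))^2/2) • d2 s1) := by module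
    calc ‖x t - x (t-h) - h • d1 s1‖ = _ := congrArg norm e
      _ ≤ ‖x t - x s1 - (h/2) • d1 s1 - ((h/2)^2/2) • d2 s1‖
          + ‖x (t-h) - x s1 - (-(h/2)) • d1 s1 - ((-(h/2))^2/2) • d2 s1‖ := norm_sub_le _ _
      _ ≤ M3*(h/2)^3/6 + M3*(h/2)^3/6 := add_le_add P3 P4
      _ = M3*h^3/24 := by ring
  have B6 : ‖mid (x t) (x (t+h)) - x s0 - ((h/2)^2/2) • d2 s0‖ ≤ M3*(h/2)^3/6 := by
    have e : mid (x t) (x (t+h)) - x s0 - ((h/2)^2/2) • d2 s0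
        = (2:ℝ)⁻¹ • ((x (t+h) - x s0 - (h/2) • d1 s0 - ((h/2)^2/2) • d2 s0)
          + (x t - x s0 - (-(h/2)) • d1 s0 - ((-(h/2))^2/2) • d2 s0)) := by
      rw [mid]; module
    calc ‖mid (x t) (x (t+h)) - x s0 - ((h/2)^2/2) • d2 s0‖ = _ := congrArg norm e
      _ = (2:ℝ)⁻¹ * ‖(x (t+h) - x s0 - (h/2) • d1 s0 - ((h/2)^2/2) • d2 s0)
          + (x t - x s0 - (-(h/2)) • d1 s0 - ((-(h/2))^2/2) • d2 s0)‖ := by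
        rw [norm_smul]; norm_num
      _ ≤ (2:ℝ)⁻¹ * (M3*(h/2)^3/6 + M3*(h/2)^3/6) := by
        apply mul_le_mul_of_nonneg_left _ (by norm_num)
        exact (norm_add_le _ _).trans (add_le_add P1 P2)
      _ = M3*(h/2)^3/6 := by ring
  have B6' : ‖mid (x (t-h)) (x t) - x s1 - ((h/2)^2/2) • d2 s1‖ ≤ M3*(h/2)^3/6 := by
    have e : mid (x (t-h)) (x t) - x s1 - ((h/2)^2/2) • d2 s1
        = (2:ℝ)⁻¹ • ((x t - x s1 - (h/2) • d1 s1 - ((h/2)^2/2) • d2 s1)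
          + (x (t-h) - x s1 - (-(h/2)) • d1 s1 - ((-(h/2))^2/2) • d2 s1)) := by
      rw [mid]; module
    calc ‖mid (x (t-h)) (x t) - x s1 - ((h/2)^2/2) • d2 s1‖ = _ := congrArg norm e
      _ = (2:ℝ)⁻¹ * ‖(x t - x s1 - (h/2) • d1 s1 - ((h/2)^2/2) • d2 s1)
          + (x (t-h) - x s1 - (-(h/2)) • d1 s1 - ((-(h/2))^2/2) • d2 s1)‖ := by
        rw [norm_smul]; norm_num
      _ ≤ (2:ℝ)⁻¹ * (M3*(h/2)^3/6 + M3*(h/2)^3/6) := by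
        apply mul_le_mul_of_nonneg_left _ (by norm_num)
        exact (norm_add_le _ _).trans (add_le_add P3 P4)
      _ = M3*(h/2)^3/6 := by ring
  have hh3 : h^3 ≤ h^2 := pow_le_pow_of_le_one hh.le hh1 (by norm_num)
  have hh4 : h^4 ≤ h^3 := pow_le_pow_of_le_one hh.le hh1 (by norm_num)
  have h4nn : (0:ℝ) ≤ h^4 := by positivity
  have B7 : ‖mid (x t) (x (t+h)) - x s0‖ ≤ Cb * h^2 := by
    have e : mid (x t) (x (t+h)) - x s0
        = (mid (x t) (x (t+h)) - x s0 - ((h/2)^2/2) • d2 s0) + ((h/2)^2/2) • d2 s0 := by module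
    calc ‖mid (x t) (x (t+h)) - x s0‖ = _ := congrArg norm e
      _ ≤ ‖mid (x t) (x (t+h)) - x s0 - ((h/2)^2/2) • d2 s0‖ + ‖((h/2)^2/2) • d2 s0‖ :=
        norm_add_le _ _
      _ ≤ M3*(h/2)^3/6 + ((h/2)^2/2) * M2 := by
        apply add_le_add B6
        rw [norm_smul, Real.norm_eq_abs, abs_of_nonneg (by positivity)]
        exact mul_le_mul_of_nonneg_left (hM2 s0 hs0I) (by positivity)
      _ ≤ Cb * h^2 := by
        rw [hCbdef]
        have h1 : M3 * h^3 ≤ M3 * h^2 := mul_le_mul_of_nonneg_left hh3 hM3n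
        linarith only [h1]
  have B7' : ‖mid (x (t-h)) (x t) - x s1‖ ≤ Cb * h^2 := by
    have e : mid (x (t-h)) (x t) - x s1
        = (mid (x (t-h)) (x t) - x s1 - ((h/2)^2/2) • d2 s1) + ((h/2)^2/2) • d2 s1 := by module
    calc ‖mid (x (t-h)) (x t) - x s1‖ = _ := congrArg norm e
      _ ≤ ‖mid (x (t-h)) (x t) - x s1 - ((h/2)^2/2) • d2 s1‖ + ‖((h/2)^2/2) • d2 s1‖ :=
        norm_add_le _ _
      _ ≤ M3*(h/2)^3/6 + ((h/2)^2/2) * M2 := by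
        apply add_le_add B6'
        rw [norm_smul, Real.norm_eq_abs, abs_of_nonneg (by positivity)]
        exact mul_le_mul_of_nonneg_left (hM2 s1 hs1I) (by positivity)
      _ ≤ Cb * h^2 := by
        rw [hCbdef]
        have h1 : M3 * h^3 ≤ M3 * h^2 := mul_le_mul_of_nonneg_left hh3 hM3n
        linarith only [h1]
  -- AT algebra helpers
  have hATsm : ∀ (y : E3) (c : ℝ) (v : E3), AT A y (c • v) = c • AT A y v :=
    fun y c v => map_smul (ContinuousLinearMap.adjoint (fderiv ℝ A y)) c v
  have hATsub : ∀ (y a b : E3), AT A y a - AT A y b = AT A y (a - b) :=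
    fun y a b => (map_sub (ContinuousLinearMap.adjoint (fderiv ℝ A y)) a b).symm
  have hLACb : 0 ≤ LA * (Cb * h^2) :=
    mul_nonneg hLA0 (mul_nonneg hCb0 (sq_nonneg h))
  -- Term 1
  have T1 : ‖(h/2) • AT A (mid (x t) (x (t+h))) (x (t+h) - x t) - (h^2/2) • p s0‖
      ≤ c1 * h^4 := by
    have hu1 : ‖AT A (mid (x t) (x (t+h))) (x (t+h) - x t) - AT A (x s0) (x (t+h) - x t)‖
        ≤ LA * (Cb * h^2) * (M1 * h) := by
      refine (AT_sub_le A _ _ _).trans ?_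
      have h1 : ‖fderiv ℝ A (mid (x t) (x (t+h))) - fderiv ℝ A (x s0)‖ ≤ LA * (Cb * h^2) :=
        (hLipA' _ hmpK _ hxs0K).trans (mul_le_mul_of_nonneg_left B7 hLA0)
      exact mul_le_mul h1 W1 (norm_nonneg _) hLACb
    have hu2 : ‖AT A (x s0) (x (t+h) - x t) - h • p s0‖ ≤ NA * (M3*h^3/24) := by
      have e2 : AT A (x s0) (x (t+h) - x t) - h • p s0
          = AT A (x s0) (x (t+h) - x t - h • d1 s0) := by
        rw [hpAT s0, ← hATsm, hATsub]
      rw [e2]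
      exact (AT_norm_le A _ _).trans (mul_le_mul (hNA _ hxs0K) B5 (norm_nonneg _) hNA0)
    have e : (h/2) • AT A (mid (x t) (x (t+h))) (x (t+h) - x t) - (h^2/2) • p s0
        = (h/2) • ((AT A (mid (x t) (x (t+h))) (x (t+h) - x t)
            - AT A (x s0) (x (t+h) - x t))
          + (AT A (x s0) (x (t+h) - x t) - h • p s0)) := by module
    calc ‖(h/2) • AT A (mid (x t) (x (t+h))) (x (t+h) - x t) - (h^2/2) • p s0‖
        = _ := congrArg norm e
      _ = (h/2) * ‖(AT A (mid (x t) (x (t+h))) (x (t+h) - x t)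
            - AT A (x s0) (x (t+h) - x t))
          + (AT A (x s0) (x (t+h) - x t) - h • p s0)‖ := by
        rw [norm_smul, Real.norm_eq_abs, abs_of_pos h2pos]
      _ ≤ (h/2) * (LA * (Cb * h^2) * (M1 * h) + NA * (M3*h^3/24)) :=
        mul_le_mul_of_nonneg_left ((norm_add_le _ _).trans (add_le_add hu1 hu2)) h2pos.le
      _ = c1 * h^4 := by rw [hc1def]; ring
  -- Term 2
  have T2 : ‖(h/2) • AT A (mid (x (t-h)) (x t)) (x t - x (t-h)) - (h^2/2) • p s1‖
      ≤ c1 * h^4 := by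
    have hu1 : ‖AT A (mid (x (t-h)) (x t)) (x t - x (t-h)) - AT A (x s1) (x t - x (t-h))‖
        ≤ LA * (Cb * h^2) * (M1 * h) := by
      refine (AT_sub_le A _ _ _).trans ?_
      have h1 : ‖fderiv ℝ A (mid (x (t-h)) (x t)) - fderiv ℝ A (x s1)‖ ≤ LA * (Cb * h^2) :=
        (hLipA' _ hmmK _ hxs1K).trans (mul_le_mul_of_nonneg_left B7' hLA0)
      exact mul_le_mul h1 W2 (norm_nonneg _) hLACb
    have hu2 : ‖AT A (x s1) (x t - x (t-h)) - h • p s1‖ ≤ NA * (M3*h^3/24) := by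
      have e2 : AT A (x s1) (x t - x (t-h)) - h • p s1
          = AT A (x s1) (x t - x (t-h) - h • d1 s1) := by
        rw [hpAT s1, ← hATsm, hATsub]
      rw [e2]
      exact (AT_norm_le A _ _).trans (mul_le_mul (hNA _ hxs1K) B5' (norm_nonneg _) hNA0)
    have e : (h/2) • AT A (mid (x (t-h)) (x t)) (x t - x (t-h)) - (h^2/2) • p s1
        = (h/2) • ((AT A (mid (x (t-h)) (x t)) (x t - x (t-h))
            - AT A (x s1) (x t - x (t-h)))
          + (AT A (x s1) (x t - x (t-h)) - h • p s1)) := by module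
    calc ‖(h/2) • AT A (mid (x (t-h)) (x t)) (x t - x (t-h)) - (h^2/2) • p s1‖
        = _ := congrArg norm e
      _ = (h/2) * ‖(AT A (mid (x (t-h)) (x t)) (x t - x (t-h))
            - AT A (x s1) (x t - x (t-h)))
          + (AT A (x s1) (x t - x (t-h)) - h • p s1)‖ := by
        rw [norm_smul, Real.norm_eq_abs, abs_of_pos h2pos]
      _ ≤ (h/2) * (LA * (Cb * h^2) * (M1 * h) + NA * (M3*h^3/24)) :=
        mul_le_mul_of_nonneg_left ((norm_add_le _ _).trans (add_le_add hu1 hu2)) h2pos.le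
      _ = c1 * h^4 := by rw [hc1def]; ring
  -- Term 3
  have Q1 : ‖p s0 - p t - (h/2) • p1 t‖ ≤ Mp2*(h/2)^2/2 := by
    have := taylor1 hdp hdp1 hcp2 t (h/2) (fun u hu => hMp2 u
      (hsubI t (t+h/2) (by linarith only [hh]) (by linarith only [hh])
        (by linarith only [hh]) (by linarith only [hh]) hu))
    rwa [show t + h/2 = s0 from hs0def.symm, habs2] at this
  have Q2 : ‖p s1 - p t - (-(h/2)) • p1 t‖ ≤ Mp2*(h/2)^2/2 := by
    have := taylor1 hdp hdp1 hcp2 t (-(h/2)) (fun u hu => hMp2 u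
      (hsubI t (t+(-(h/2))) (by linarith only [hh]) (by linarith only [hh])
        (by linarith only [hh]) (by linarith only [hh]) hu))
    rwa [show t + -(h/2) = s1 from by rw [hs1def]; ring, habsn2] at this
  have T3 : ‖(h^2/2) • p s0 + (h^2/2) • p s1 - (h^2) • p t‖ ≤ cT3 * h^4 := by
    have e : (h^2/2) • p s0 + (h^2/2) • p s1 - (h^2) • p t
        = (h^2/2) • ((p s0 - p t - (h/2) • p1 t) + (p s1 - p t - (-(h/2)) • p1 t)) := by
      module
    calc ‖(h^2/2) • p s0 + (h^2/2) • p s1 - (h^2) • p t‖ = _ := congrArg norm e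
      _ = (h^2/2) * ‖(p s0 - p t - (h/2) • p1 t) + (p s1 - p t - (-(h/2)) • p1 t)‖ := by
        rw [norm_smul, Real.norm_eq_abs, abs_of_nonneg (by positivity)]
      _ ≤ (h^2/2) * (Mp2*(h/2)^2/2 + Mp2*(h/2)^2/2) :=
        mul_le_mul_of_nonneg_left ((norm_add_le _ _).trans (add_le_add Q1 Q2)) (by positivity)
      _ = cT3 * h^4 := by rw [hcT3def]; ring
  -- Term 4 : the A-part
  have Rq1 : ‖q s0 - q t - (h/2) • q1 t - ((h/2)^2/2) • q2 t‖ ≤ Mq3*(h/2)^3/6 := by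
    have := taylor2 hdq hdq1 hdq2 hcq3 t (h/2) (fun u hu => hMq3 u
      (hsubI t (t+h/2) (by linarith only [hh]) (by linarith only [hh])
        (by linarith only [hh]) (by linarith only [hh]) hu))
    rwa [show t + h/2 = s0 from hs0def.symm, habs2] at this
  have Rq2 : ‖q s1 - q t - (-(h/2)) • q1 t - ((-(h/2))^2/2) • q2 t‖ ≤ Mq3*(h/2)^3/6 := by
    have := taylor2 hdq hdq1 hdq2 hcq3 t (-(h/2)) (fun u hu => hMq3 u
      (hsubI t (t+(-(h/2))) (by linarith only [hh]) (by linarith only [hh])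
        (by linarith only [hh]) (by linarith only [hh]) hu))
    rwa [show t + -(h/2) = s1 from by rw [hs1def]; ring, habsn2] at this
  have Rq : ‖q s0 - q s1 - h • q1 t‖ ≤ Mq3*h^3/24 := by
    have e : q s0 - q s1 - h • q1 t
        = (q s0 - q t - (h/2) • q1 t - ((h/2)^2/2) • q2 t)
          - (q s1 - q t - (-(h/2)) • q1 t - ((-(h/2))^2/2) • q2 t) := by module
    calc ‖q s0 - q s1 - h • q1 t‖ = _ := congrArg norm e
      _ ≤ ‖q s0 - q t - (h/2) • q1 t - ((h/2)^2/2) • q2 t‖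
          + ‖q s1 - q t - (-(h/2)) • q1 t - ((-(h/2))^2/2) • q2 t‖ := norm_sub_le _ _
      _ ≤ Mq3*(h/2)^3/6 + Mq3*(h/2)^3/6 := add_le_add Rq1 Rq2
      _ = Mq3*h^3/24 := by ring
  have Qa : ‖A (mid (x t) (x (t+h))) - q s0
      - fderiv ℝ A (x s0) (mid (x t) (x (t+h)) - x s0)‖
      ≤ LA * (Cb*h^2) * (Cb*h^2) := by
    have hseg : ∀ w ∈ segment ℝ (x s0) (mid (x t) (x (t+h))),
        ‖fderiv ℝ A w - fderiv ℝ A (x s0)‖ ≤ LA * (Cb*h^2) := by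
      intro w hw
      have hwK : w ∈ K := hKconv.segment_subset hxs0K hmpK hw
      exact (hLipA' w hwK _ hxs0K).trans
        (mul_le_mul_of_nonneg_left ((seg_norm hw).trans B7) hLA0)
    have hq := quad_bound (hA.differentiable (by norm_num)) hseg
    exact hq.trans (mul_le_mul_of_nonneg_left B7 hLACb)
  have Qb : ‖A (mid (x (t-h)) (x t)) - q s1
      - fderiv ℝ A (x s1) (mid (x (t-h)) (x t) - x s1)‖
      ≤ LA * (Cb*h^2) * (Cb*h^2) := by
    have hseg : ∀ w ∈ segment ℝ (x s1) (mid (x (t-h)) (x t)),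
        ‖fderiv ℝ A w - fderiv ℝ A (x s1)‖ ≤ LA * (Cb*h^2) := by
      intro w hw
      have hwK : w ∈ K := hKconv.segment_subset hxs1K hmmK hw
      exact (hLipA' w hwK _ hxs1K).trans
        (mul_le_mul_of_nonneg_left ((seg_norm hw).trans B7') hLA0)
    have hq := quad_bound (hA.differentiable (by norm_num)) hseg
    exact hq.trans (mul_le_mul_of_nonneg_left B7' hLACb)
  have Qc : ‖fderiv ℝ A (x s0) (mid (x t) (x (t+h)) - x s0) - ((h/2)^2/2) • γ s0‖
      ≤ NA * (M3*(h/2)^3/6) := by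
    have e : fderiv ℝ A (x s0) (mid (x t) (x (t+h)) - x s0 - ((h/2)^2/2) • d2 s0)
        = fderiv ℝ A (x s0) (mid (x t) (x (t+h)) - x s0) - ((h/2)^2/2) • γ s0 := by
      rw [map_sub, map_smul]
    rw [← e]
    exact (ContinuousLinearMap.le_opNorm _ _).trans
      (mul_le_mul (hNA _ hxs0K) B6 (norm_nonneg _) hNA0)
  have Qd : ‖fderiv ℝ A (x s1) (mid (x (t-h)) (x t) - x s1) - ((h/2)^2/2) • γ s1‖
      ≤ NA * (M3*(h/2)^3/6) := by
    have e : fderiv ℝ A (x s1) (mid (x (t-h)) (x t) - x s1 - ((h/2)^2/2) • d2 s1)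
        = fderiv ℝ A (x s1) (mid (x (t-h)) (x t) - x s1) - ((h/2)^2/2) • γ s1 := by
      rw [map_sub, map_smul]
    rw [← e]
    exact (ContinuousLinearMap.le_opNorm _ _).trans
      (mul_le_mul (hNA _ hxs1K) B6' (norm_nonneg _) hNA0)
  have Qe : ‖γ s0 - γ s1‖ ≤ Mγ1 * h := by
    have := taylor0 hdγ hcγ1 s1 h (fun u hu => hMγ1 u
      (hsubI s1 (s1+h) (by rw [hs1def]; linarith only [hh]) (by rw [hs1def]; linarith only [hh])
        (by rw [hs1def]; linarith only [hh]) (by rw [hs1def]; linarith only [hh]) hu))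
    rwa [show s1 + h = s0 from by rw [hs0def, hs1def]; ring, habs] at this
  have T4 : ‖h • (A (mid (x t) (x (t+h))) - A (mid (x (t-h)) (x t))) - (h^2) • q1 t‖
      ≤ cq * h^4 := by
    have e : h • (A (mid (x t) (x (t+h))) - A (mid (x (t-h)) (x t))) - (h^2) • q1 t
        = h • ((q s0 - q s1 - h • q1 t)
          + (A (mid (x t) (x (t+h))) - q s0
              - fderiv ℝ A (x s0) (mid (x t) (x (t+h)) - x s0))
          - (A (mid (x (t-h)) (x t)) - q s1
              - fderiv ℝ A (x s1) (mid (x (t-h)) (x t) - x s1))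
          + (fderiv ℝ A (x s0) (mid (x t) (x (t+h)) - x s0) - ((h/2)^2/2) • γ s0)
          - (fderiv ℝ A (x s1) (mid (x (t-h)) (x t) - x s1) - ((h/2)^2/2) • γ s1)
          + ((h/2)^2/2) • (γ s0 - γ s1)) := by
      have hq0 : q s0 = A (x s0) := rfl
      have hq1' : q s1 = A (x s1) := rfl
      rw [hq0, hq1']
      module
    have hinner : ‖(q s0 - q s1 - h • q1 t)
          + (A (mid (x t) (x (t+h))) - q s0
              - fderiv ℝ A (x s0) (mid (x t) (x (t+h)) - x s0))
          - (A (mid (x (t-h)) (x t)) - q s1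
              - fderiv ℝ A (x s1) (mid (x (t-h)) (x t) - x s1))
          + (fderiv ℝ A (x s0) (mid (x t) (x (t+h)) - x s0) - ((h/2)^2/2) • γ s0)
          - (fderiv ℝ A (x s1) (mid (x (t-h)) (x t) - x s1) - ((h/2)^2/2) • γ s1)
          + ((h/2)^2/2) • (γ s0 - γ s1)‖
        ≤ Mq3*h^3/24 + LA * (Cb*h^2) * (Cb*h^2) + LA * (Cb*h^2) * (Cb*h^2)
          + NA * (M3*(h/2)^3/6) + NA * (M3*(h/2)^3/6) + ((h/2)^2/2) * (Mγ1 * h) := by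
      have hlast : ‖((h/2)^2/2) • (γ s0 - γ s1)‖ ≤ ((h/2)^2/2) * (Mγ1 * h) := by
        rw [norm_smul, Real.norm_eq_abs, abs_of_nonneg (by positivity)]
        exact mul_le_mul_of_nonneg_left Qe (by positivity)
      calc ‖_ + _ - _ + _ - _ + _‖
          ≤ ‖_ + _ - _ + _ - _‖ + ‖((h/2)^2/2) • (γ s0 - γ s1)‖ := norm_add_le _ _
        _ ≤ (‖_ + _ - _ + _‖ + ‖fderiv ℝ A (x s1) (mid (x (t-h)) (x t) - x s1)
              - ((h/2)^2/2) • γ s1‖) + ‖((h/2)^2/2) • (γ s0 - γ s1)‖ :=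
          add_le_add_left (norm_sub_le _ _) _
        _ ≤ ((‖_ + _ - _‖ + ‖fderiv ℝ A (x s0) (mid (x t) (x (t+h)) - x s0)
              - ((h/2)^2/2) • γ s0‖) + ‖fderiv ℝ A (x s1) (mid (x (t-h)) (x t) - x s1)
              - ((h/2)^2/2) • γ s1‖) + ‖((h/2)^2/2) • (γ s0 - γ s1)‖ :=
          add_le_add_left (add_le_add_left (norm_add_le _ _) _) _
        _ ≤ (((‖_ + _‖ + ‖A (mid (x (t-h)) (x t)) - q s1
              - fderiv ℝ A (x s1) (mid (x (t-h)) (x t) - x s1)‖)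
              + ‖fderiv ℝ A (x s0) (mid (x t) (x (t+h)) - x s0) - ((h/2)^2/2) • γ s0‖)
              + ‖fderiv ℝ A (x s1) (mid (x (t-h)) (x t) - x s1) - ((h/2)^2/2) • γ s1‖)
              + ‖((h/2)^2/2) • (γ s0 - γ s1)‖ :=
          add_le_add_left (add_le_add_left (add_le_add_left (norm_sub_le _ _) _) _) _
        _ ≤ ((((‖q s0 - q s1 - h • q1 t‖ + ‖A (mid (x t) (x (t+h))) - q s0
              - fderiv ℝ A (x s0) (mid (x t) (x (t+h)) - x s0)‖)
              + ‖A (mid (x (t-h)) (x t)) - q s1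
              - fderiv ℝ A (x s1) (mid (x (t-h)) (x t) - x s1)‖)
              + ‖fderiv ℝ A (x s0) (mid (x t) (x (t+h)) - x s0) - ((h/2)^2/2) • γ s0‖)
              + ‖fderiv ℝ A (x s1) (mid (x (t-h)) (x t) - x s1) - ((h/2)^2/2) • γ s1‖)
              + ‖((h/2)^2/2) • (γ s0 - γ s1)‖ :=
          add_le_add_left (add_le_add_left (add_le_add_left
            (add_le_add_left (norm_add_le _ _) _) _) _) _
        _ ≤ Mq3*h^3/24 + LA * (Cb*h^2) * (Cb*h^2) + LA * (Cb*h^2) * (Cb*h^2)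
          + NA * (M3*(h/2)^3/6) + NA * (M3*(h/2)^3/6) + ((h/2)^2/2) * (Mγ1 * h) := by
          refine add_le_add (add_le_add (add_le_add (add_le_add
            (add_le_add Rq Qa) Qb) Qc) Qd) hlast
    have h54 : h^5 ≤ h^4 := pow_le_pow_of_le_one hh.le hh1 (by norm_num)
    calc ‖h • (A (mid (x t) (x (t+h))) - A (mid (x (t-h)) (x t))) - (h^2) • q1 t‖
        = _ := congrArg norm e
      _ = h * ‖(q s0 - q s1 - h • q1 t)
          + (A (mid (x t) (x (t+h))) - q s0
              - fderiv ℝ A (x s0) (mid (x t) (x (t+h)) - x s0))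
          - (A (mid (x (t-h)) (x t)) - q s1
              - fderiv ℝ A (x s1) (mid (x (t-h)) (x t) - x s1))
          + (fderiv ℝ A (x s0) (mid (x t) (x (t+h)) - x s0) - ((h/2)^2/2) • γ s0)
          - (fderiv ℝ A (x s1) (mid (x (t-h)) (x t) - x s1) - ((h/2)^2/2) • γ s1)
          + ((h/2)^2/2) • (γ s0 - γ s1)‖ := by
        rw [norm_smul, Real.norm_eq_abs, habs]
      _ ≤ h * (Mq3*h^3/24 + LA * (Cb*h^2) * (Cb*h^2) + LA * (Cb*h^2) * (Cb*h^2)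
          + NA * (M3*(h/2)^3/6) + NA * (M3*(h/2)^3/6) + ((h/2)^2/2) * (Mγ1 * h)) :=
        mul_le_mul_of_nonneg_left hinner hh.le
      _ ≤ cq * h^4 := by
        rw [hcqdef]
        have hx5 : LA * Cb^2 * h^5 ≤ LA * Cb^2 * h^4 :=
          mul_le_mul_of_nonneg_left h54 (mul_nonneg hLA0 (sq_nonneg Cb))
        linarith only [hx5]
  -- Term 5 : the F-part
  have Fa : ‖F (mid (x t) (x (t+h))) - G s0‖ ≤ LF * (Cb*h^2) := by
    show ‖F (mid (x t) (x (t+h))) - F (x s0)‖ ≤ LF * (Cb*h^2)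
    exact (hLipF _ hmpK _ hxs0K).trans (mul_le_mul_of_nonneg_left B7 hLF0)
  have Fb : ‖F (mid (x (t-h)) (x t)) - G s1‖ ≤ LF * (Cb*h^2) := by
    show ‖F (mid (x (t-h)) (x t)) - F (x s1)‖ ≤ LF * (Cb*h^2)
    exact (hLipF _ hmmK _ hxs1K).trans (mul_le_mul_of_nonneg_left B7' hLF0)
  have FQ1 : ‖G s0 - G t - (h/2) • G1 t‖ ≤ MG2*(h/2)^2/2 := by
    have := taylor1 hdG hdG1 hcG2 t (h/2) (fun u hu => hMG2 u
      (hsubI t (t+h/2) (by linarith only [hh]) (by linarith only [hh])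
        (by linarith only [hh]) (by linarith only [hh]) hu))
    rwa [show t + h/2 = s0 from hs0def.symm, habs2] at this
  have FQ2 : ‖G s1 - G t - (-(h/2)) • G1 t‖ ≤ MG2*(h/2)^2/2 := by
    have := taylor1 hdG hdG1 hcG2 t (-(h/2)) (fun u hu => hMG2 u
      (hsubI t (t+(-(h/2))) (by linarith only [hh]) (by linarith only [hh])
        (by linarith only [hh]) (by linarith only [hh]) hu))
    rwa [show t + -(h/2) = s1 from by rw [hs1def]; ring, habsn2] at this
  have T5 : ‖(h^2/2) • (F (mid (x t) (x (t+h))) + F (mid (x (t-h)) (x t))) - (h^2) • G t‖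
      ≤ cF5 * h^4 := by
    have e : (h^2/2) • (F (mid (x t) (x (t+h))) + F (mid (x (t-h)) (x t))) - (h^2) • G t
        = (h^2/2) • ((F (mid (x t) (x (t+h))) - G s0) + (F (mid (x (t-h)) (x t)) - G s1)
          + ((G s0 - G t - (h/2) • G1 t) + (G s1 - G t - (-(h/2)) • G1 t))) := by module
    calc ‖(h^2/2) • (F (mid (x t) (x (t+h))) + F (mid (x (t-h)) (x t))) - (h^2) • G t‖
        = _ := congrArg norm e
      _ = (h^2/2) * ‖(F (mid (x t) (x (t+h))) - G s0) + (F (mid (x (t-h)) (x t)) - G s1)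
          + ((G s0 - G t - (h/2) • G1 t) + (G s1 - G t - (-(h/2)) • G1 t))‖ := by
        rw [norm_smul, Real.norm_eq_abs, abs_of_nonneg (by positivity)]
      _ ≤ (h^2/2) * ((LF * (Cb*h^2) + LF * (Cb*h^2)) + (MG2*(h/2)^2/2 + MG2*(h/2)^2/2)) := by
        refine mul_le_mul_of_nonneg_left ?_ (by positivity)
        refine (norm_add_le _ _).trans (add_le_add ((norm_add_le _ _).trans
          (add_le_add Fa Fb)) ((norm_add_le _ _).trans (add_le_add FQ1 FQ2)))
      _ = cF5 * h^4 := by rw [hcF5def]; ring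
  -- norm of S
  have hmpmm : ‖mid (x t) (x (t+h)) - mid (x (t-h)) (x t)‖ ≤ M1 * h := by
    have e : mid (x t) (x (t+h)) - mid (x (t-h)) (x t)
        = (2:ℝ)⁻¹ • (x (t+h) - x (t-h)) := by
      rw [hmid, hmid]; module
    calc ‖mid (x t) (x (t+h)) - mid (x (t-h)) (x t)‖ = _ := congrArg norm e
      _ = (2:ℝ)⁻¹ * ‖x (t+h) - x (t-h)‖ := by
        rw [norm_smul, Real.norm_eq_abs, abs_of_nonneg (by norm_num)]
      _ ≤ (2:ℝ)⁻¹ * (M1 * (2*h)) := mul_le_mul_of_nonneg_left W3 (by norm_num)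
      _ = M1 * h := by ring
  set SS : E3 := (h/2) • AT A (mid (x t) (x (t+h))) (x (t+h) - x t)
      + (h/2) • AT A (mid (x (t-h)) (x t)) (x t - x (t-h))
      - h • (A (mid (x t) (x (t+h))) - A (mid (x (t-h)) (x t)))
      + (h^2/2) • (F (mid (x t) (x (t+h))) + F (mid (x (t-h)) (x t))) with hSS
  have hSnorm : ‖SS‖ ≤ cS * h^2 := by
    rw [hSS]
    have n1 : ‖(h/2) • AT A (mid (x t) (x (t+h))) (x (t+h) - x t)‖
        ≤ (h/2) * (NA * (M1*h)) := by
      rw [norm_smul, Real.norm_eq_abs, abs_of_pos h2pos]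
      exact mul_le_mul_of_nonneg_left ((AT_norm_le A _ _).trans
        (mul_le_mul (hNA _ hmpK) W1 (norm_nonneg _) hNA0)) h2pos.le
    have n2 : ‖(h/2) • AT A (mid (x (t-h)) (x t)) (x t - x (t-h))‖
        ≤ (h/2) * (NA * (M1*h)) := by
      rw [norm_smul, Real.norm_eq_abs, abs_of_pos h2pos]
      exact mul_le_mul_of_nonneg_left ((AT_norm_le A _ _).trans
        (mul_le_mul (hNA _ hmmK) W2 (norm_nonneg _) hNA0)) h2pos.le
    have n3 : ‖h • (A (mid (x t) (x (t+h))) - A (mid (x (t-h)) (x t)))‖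
        ≤ h * (NA * (M1*h)) := by
      rw [norm_smul, Real.norm_eq_abs, habs]
      exact mul_le_mul_of_nonneg_left ((hLipA _ hmpK _ hmmK).trans
        (mul_le_mul_of_nonneg_left hmpmm hNA0)) hh.le
    have n4 : ‖(h^2/2) • (F (mid (x t) (x (t+h))) + F (mid (x (t-h)) (x t)))‖
        ≤ (h^2/2) * (NF + NF) := by
      rw [norm_smul, Real.norm_eq_abs, abs_of_nonneg (by positivity)]
      exact mul_le_mul_of_nonneg_left ((norm_add_le _ _).trans
        (add_le_add (hNF _ hmpK) (hNF _ hmmK))) (by positivity)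
    calc ‖(h/2) • AT A (mid (x t) (x (t+h))) (x (t+h) - x t)
        + (h/2) • AT A (mid (x (t-h)) (x t)) (x t - x (t-h))
        - h • (A (mid (x t) (x (t+h))) - A (mid (x (t-h)) (x t)))
        + (h^2/2) • (F (mid (x t) (x (t+h))) + F (mid (x (t-h)) (x t)))‖
        ≤ ‖(h/2) • AT A (mid (x t) (x (t+h))) (x (t+h) - x t)
          + (h/2) • AT A (mid (x (t-h)) (x t)) (x t - x (t-h))
          - h • (A (mid (x t) (x (t+h))) - A (mid (x (t-h)) (x t)))‖
          + ‖(h^2/2) • (F (mid (x t) (x (t+h))) + F (mid (x (t-h)) (x t)))‖ :=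
        norm_add_le _ _
      _ ≤ (‖(h/2) • AT A (mid (x t) (x (t+h))) (x (t+h) - x t)
          + (h/2) • AT A (mid (x (t-h)) (x t)) (x t - x (t-h))‖
          + ‖h • (A (mid (x t) (x (t+h))) - A (mid (x (t-h)) (x t)))‖)
          + ‖(h^2/2) • (F (mid (x t) (x (t+h))) + F (mid (x (t-h)) (x t)))‖ :=
        add_le_add_left (norm_sub_le _ _) _
      _ ≤ ((‖(h/2) • AT A (mid (x t) (x (t+h))) (x (t+h) - x t)‖
          + ‖(h/2) • AT A (mid (x (t-h)) (x t)) (x t - x (t-h))‖)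
          + ‖h • (A (mid (x t) (x (t+h))) - A (mid (x (t-h)) (x t)))‖)
          + ‖(h^2/2) • (F (mid (x t) (x (t+h))) + F (mid (x (t-h)) (x t)))‖ :=
        add_le_add_left (add_le_add_left (norm_add_le _ _) _) _
      _ ≤ (((h/2) * (NA * (M1*h)) + (h/2) * (NA * (M1*h))) + h * (NA * (M1*h)))
          + (h^2/2) * (NF + NF) :=
        add_le_add (add_le_add (add_le_add n1 n2) n3) n4
      _ = cS * h^2 := by rw [hcSdef]; ring
  -- the filter term
  have htb : |1 - tanc (h/2)| ≤ (h/2)^2 := by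
    rw [abs_sub_comm]
    exact tanc_bound h2pos (by linarith only [hh1, hh])
  have hBB : ‖cross3 B₀ (cross3 B₀ SS)‖ ≤ ‖SS‖ := by
    calc ‖cross3 B₀ (cross3 B₀ SS)‖ ≤ ‖B₀‖ * ‖cross3 B₀ SS‖ := norm_cross3_le _ _
      _ = ‖cross3 B₀ SS‖ := by rw [hB₀, one_mul]
      _ ≤ ‖B₀‖ * ‖SS‖ := norm_cross3_le _ _
      _ = ‖SS‖ := by rw [hB₀, one_mul]
  have hfil : ‖(1 - tanc (h/2)) • cross3 B₀ (cross3 B₀ SS)‖ ≤ (cS/4) * h^4 := by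
    rw [norm_smul, Real.norm_eq_abs]
    calc |1 - tanc (h/2)| * ‖cross3 B₀ (cross3 B₀ SS)‖
        ≤ (h/2)^2 * (cS * h^2) :=
        mul_le_mul htb (hBB.trans hSnorm) (norm_nonneg _) (by positivity)
      _ = (cS/4) * h^4 := by ring
  -- the ODE at time t
  have hodet := hode t htI
  rw [cross3_curl3 A (x t) (d1 t), ← hq1eq t] at hodet
  have hd2t : d2 t = p t - q1 t + G t := by
    rw [hpAT t]
    exact hodet
  -- final assembly
  have hpsi : psiF (h/2) B₀ SS = SS + (1 - tanc (h/2)) • cross3 B₀ (cross3 B₀ SS) := rfl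
  have hfinal : x (t+h) - (2:ℝ) • x t + x (t-h) - psiF (h/2) B₀ SS
      = (x (t+h) - (2:ℝ) • x t + x (t-h) - (h^2) • d2 t)
        - ((h/2) • AT A (mid (x t) (x (t+h))) (x (t+h) - x t) - (h^2/2) • p s0)
        - ((h/2) • AT A (mid (x (t-h)) (x t)) (x t - x (t-h)) - (h^2/2) • p s1)
        - ((h^2/2) • p s0 + (h^2/2) • p s1 - (h^2) • p t)
        + (h • (A (mid (x t) (x (t+h))) - A (mid (x (t-h)) (x t))) - (h^2) • q1 t)
        - ((h^2/2) • (F (mid (x t) (x (t+h))) + F (mid (x (t-h)) (x t))) - (h^2) • G t)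
        - (1 - tanc (h/2)) • cross3 B₀ (cross3 B₀ SS) := by
    rw [hpsi, hd2t]
    rw [hSS]
    module
  calc ‖x (t+h) - (2:ℝ) • x t + x (t-h) - psiF (h/2) B₀ SS‖ = _ := congrArg norm hfinal
    _ ≤ ‖(x (t+h) - (2:ℝ) • x t + x (t-h) - (h^2) • d2 t)
        - ((h/2) • AT A (mid (x t) (x (t+h))) (x (t+h) - x t) - (h^2/2) • p s0)
        - ((h/2) • AT A (mid (x (t-h)) (x t)) (x t - x (t-h)) - (h^2/2) • p s1)
        - ((h^2/2) • p s0 + (h^2/2) • p s1 - (h^2) • p t)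
        + (h • (A (mid (x t) (x (t+h))) - A (mid (x (t-h)) (x t))) - (h^2) • q1 t)
        - ((h^2/2) • (F (mid (x t) (x (t+h))) + F (mid (x (t-h)) (x t))) - (h^2) • G t)‖
        + ‖(1 - tanc (h/2)) • cross3 B₀ (cross3 B₀ SS)‖ := norm_sub_le _ _
    _ ≤ (‖(x (t+h) - (2:ℝ) • x t + x (t-h) - (h^2) • d2 t)
        - ((h/2) • AT A (mid (x t) (x (t+h))) (x (t+h) - x t) - (h^2/2) • p s0)
        - ((h/2) • AT A (mid (x (t-h)) (x t)) (x t - x (t-h)) - (h^2/2) • p s1)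
        - ((h^2/2) • p s0 + (h^2/2) • p s1 - (h^2) • p t)
        + (h • (A (mid (x t) (x (t+h))) - A (mid (x (t-h)) (x t))) - (h^2) • q1 t)‖
        + ‖(h^2/2) • (F (mid (x t) (x (t+h))) + F (mid (x (t-h)) (x t))) - (h^2) • G t‖)
        + ‖(1 - tanc (h/2)) • cross3 B₀ (cross3 B₀ SS)‖ :=
      add_le_add_left (norm_sub_le _ _) _
    _ ≤ ((‖(x (t+h) - (2:ℝ) • x t + x (t-h) - (h^2) • d2 t)
        - ((h/2) • AT A (mid (x t) (x (t+h))) (x (t+h) - x t) - (h^2/2) • p s0)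
        - ((h/2) • AT A (mid (x (t-h)) (x t)) (x t - x (t-h)) - (h^2/2) • p s1)
        - ((h^2/2) • p s0 + (h^2/2) • p s1 - (h^2) • p t)‖
        + ‖h • (A (mid (x t) (x (t+h))) - A (mid (x (t-h)) (x t))) - (h^2) • q1 t‖)
        + ‖(h^2/2) • (F (mid (x t) (x (t+h))) + F (mid (x (t-h)) (x t))) - (h^2) • G t‖)
        + ‖(1 - tanc (h/2)) • cross3 B₀ (cross3 B₀ SS)‖ :=
      add_le_add_left (add_le_add_left (norm_add_le _ _) _) _
    _ ≤ (((‖(x (t+h) - (2:ℝ) • x t + x (t-h) - (h^2) • d2 t)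
        - ((h/2) • AT A (mid (x t) (x (t+h))) (x (t+h) - x t) - (h^2/2) • p s0)
        - ((h/2) • AT A (mid (x (t-h)) (x t)) (x t - x (t-h)) - (h^2/2) • p s1)‖
        + ‖(h^2/2) • p s0 + (h^2/2) • p s1 - (h^2) • p t‖)
        + ‖h • (A (mid (x t) (x (t+h))) - A (mid (x (t-h)) (x t))) - (h^2) • q1 t‖)
        + ‖(h^2/2) • (F (mid (x t) (x (t+h))) + F (mid (x (t-h)) (x t))) - (h^2) • G t‖)
        + ‖(1 - tanc (h/2)) • cross3 B₀ (cross3 B₀ SS)‖ :=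
      add_le_add_left (add_le_add_left (add_le_add_left (norm_sub_le _ _) _) _) _
    _ ≤ ((((‖(x (t+h) - (2:ℝ) • x t + x (t-h) - (h^2) • d2 t)
        - ((h/2) • AT A (mid (x t) (x (t+h))) (x (t+h) - x t) - (h^2/2) • p s0)‖
        + ‖(h/2) • AT A (mid (x (t-h)) (x t)) (x t - x (t-h)) - (h^2/2) • p s1‖)
        + ‖(h^2/2) • p s0 + (h^2/2) • p s1 - (h^2) • p t‖)
        + ‖h • (A (mid (x t) (x (t+h))) - A (mid (x (t-h)) (x t))) - (h^2) • q1 t‖)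
        + ‖(h^2/2) • (F (mid (x t) (x (t+h))) + F (mid (x (t-h)) (x t))) - (h^2) • G t‖)
        + ‖(1 - tanc (h/2)) • cross3 B₀ (cross3 B₀ SS)‖ :=
      add_le_add_left (add_le_add_left (add_le_add_left (add_le_add_left
        (norm_sub_le _ _) _) _) _) _
    _ ≤ (((((‖x (t+h) - (2:ℝ) • x t + x (t-h) - (h^2) • d2 t‖
        + ‖(h/2) • AT A (mid (x t) (x (t+h))) (x (t+h) - x t) - (h^2/2) • p s0‖)
        + ‖(h/2) • AT A (mid (x (t-h)) (x t)) (x t - x (t-h)) - (h^2/2) • p s1‖)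
        + ‖(h^2/2) • p s0 + (h^2/2) • p s1 - (h^2) • p t‖)
        + ‖h • (A (mid (x t) (x (t+h))) - A (mid (x (t-h)) (x t))) - (h^2) • q1 t‖)
        + ‖(h^2/2) • (F (mid (x t) (x (t+h))) + F (mid (x (t-h)) (x t))) - (h^2) • G t‖)
        + ‖(1 - tanc (h/2)) • cross3 B₀ (cross3 B₀ SS)‖ :=
      add_le_add_left (add_le_add_left (add_le_add_left (add_le_add_left
        (add_le_add_left (norm_sub_le _ _) _) _) _) _) _
    _ ≤ (((((M4*h^4/12 + c1 * h^4) + c1 * h^4) + cT3 * h^4) + cq * h^4) + cF5 * h^4)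
        + (cS/4) * h^4 :=
      add_le_add (add_le_add (add_le_add (add_le_add (add_le_add
        (add_le_add hD T1) T2) T3) T4) T5) hfil
    _ ≤ CC * h^4 := by
      rw [hCCdef]
      linarith only [h4nn]
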